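/- For the function δ₁(a) = (2/π) * ( arccosh(1/√(1-a²)) * (1 - a²/2)/(a·√(1 - 1/4 - a²/4)) + 2·sinh( (1/2)·arccosh( (a² + 1/2 - 4)/(1 - 4 + a²) ) ) ) obtained by setting t = 1/2 in the hyp-hor covering density formula δ(C¹_a(t)) = (2/π)·( arccosh(1/√(1-a²))·(1-ta²)/(a·√(2t - t² - a²t²)) + 2·sinh((1/2)·arccosh((2ta² + t - 4)/(2t - 4 + 2ta²))) ), one has lim_{a→0⁺} δ₁(a) = √12/π. -/

import Mathlib

open Real Filter Set

/-- Inverse hyperbolic cosine. -/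
noncomputable def arccosh (x : ℝ) : ℝ := Real.log (x + Real.sqrt (x ^ 2 - 1))

/-- Density of the type-1 hyp-hor covering at `t = 1/2`. -/
noncomputable def delta1 (a : ℝ) : ℝ :=
  (2 / π) * (arccosh (1 / Real.sqrt (1 - a ^ 2)) * (1 - a ^ 2 / 2) /
      (a * Real.sqrt (1 - 1 / 4 - a ^ 2 / 4)) +
    2 * Real.sinh ((1 / 2) * arccosh ((a ^ 2 + 1 / 2 - 4) / (1 - 4 + a ^ 2))))

lemma arccosh_eq (a : ℝ) (h0 : 0 < a) (h1 : a < 1) :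
    arccosh (1 / Real.sqrt (1 - a ^ 2)) = (Real.log (1 + a) - Real.log (1 - a)) / 2 := by
  have hpos : (0:ℝ) < 1 - a ^ 2 := by nlinarith
  have hs : 0 < Real.sqrt (1 - a ^ 2) := Real.sqrt_pos.2 hpos
  have hsq : Real.sqrt (1 - a ^ 2) ^ 2 = 1 - a ^ 2 := Real.sq_sqrt hpos.le
  have h2 : (1 / Real.sqrt (1 - a ^ 2)) ^ 2 - 1 = (a / Real.sqrt (1 - a ^ 2)) ^ 2 := by
    field_simp
    rw [hsq]; ring
  rw [arccosh, h2, Real.sqrt_sq (by positivity)]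
  have h3 : 1 / Real.sqrt (1 - a ^ 2) + a / Real.sqrt (1 - a ^ 2)
      = (1 + a) / Real.sqrt (1 - a ^ 2) := by ring
  rw [h3, Real.log_div (by linarith : (0:ℝ) < 1 + a).ne' hs.ne', Real.log_sqrt hpos.le]
  have h4 : 1 - a ^ 2 = (1 + a) * (1 - a) := by ring
  rw [h4, Real.log_mul (by linarith : (0:ℝ) < 1 + a).ne' (by linarith : (0:ℝ) < 1 - a).ne']
  ring

lemma cosh_arccosh (x : ℝ) (hx : 1 ≤ x) : Real.cosh (arccosh x) = x := by
  have h : (0:ℝ) ≤ x ^ 2 - 1 := by nlinarith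
  have hs : Real.sqrt (x ^ 2 - 1) ^ 2 = x ^ 2 - 1 := Real.sq_sqrt h
  have hsnn := Real.sqrt_nonneg (x ^ 2 - 1)
  have hpos : 0 < x + Real.sqrt (x ^ 2 - 1) := by linarith
  rw [arccosh, Real.cosh_log hpos]
  have hinv : (x + Real.sqrt (x ^ 2 - 1))⁻¹ = x - Real.sqrt (x ^ 2 - 1) := by
    apply inv_eq_of_mul_eq_one_right
    nlinarith [hs]
  rw [hinv]; ring

lemma arccosh_nonneg (x : ℝ) (hx : 1 ≤ x) : 0 ≤ arccosh x := by
  apply Real.log_nonneg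
  have := Real.sqrt_nonneg (x ^ 2 - 1)
  linarith

lemma sinh_half_arccosh (x : ℝ) (hx : 1 ≤ x) :
    Real.sinh ((1 / 2) * arccosh x) = Real.sqrt ((x - 1) / 2) := by
  have hy : 0 ≤ (1 / 2) * arccosh x := by
    have := arccosh_nonneg x hx; linarith
  have hsinh : 0 ≤ Real.sinh ((1 / 2) * arccosh x) := Real.sinh_nonneg_iff.2 hy
  have h2 : Real.cosh (2 * ((1 / 2) * arccosh x)) = x := by
    rw [show 2 * ((1 / 2) * arccosh x) = arccosh x by ring, cosh_arccosh x hx]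
  rw [Real.cosh_two_mul, Real.cosh_sq] at h2
  have : (x - 1) / 2 = Real.sinh ((1 / 2) * arccosh x) ^ 2 := by linarith
  rw [this, Real.sqrt_sq hsinh]

lemma tendstoT1 : Tendsto (fun a : ℝ => (Real.log (1 + a) - Real.log (1 - a)) / a)
    (nhdsWithin 0 (Ioi 0)) (nhds 2) := by
  have h1 : HasDerivAt (fun a : ℝ => Real.log (1 + a)) 1 0 := by
    have := (((hasDerivAt_id (0:ℝ)).const_add 1).log (by norm_num))
    simpa using this
  have h2 : HasDerivAt (fun a : ℝ => Real.log (1 - a)) (-1) 0 := by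
    have := (((hasDerivAt_id (0:ℝ)).const_sub 1).log (by norm_num))
    simpa using this
  have hd : HasDerivAt (fun a : ℝ => Real.log (1 + a) - Real.log (1 - a)) 2 0 := by
    have := h1.sub h2
    norm_num at this
    exact this
  have hslope := hasDerivAt_iff_tendsto_slope.mp hd
  have hsub : Ioi (0:ℝ) ⊆ {(0:ℝ)}ᶜ := fun x hx => ne_of_gt hx
  have h3 := hslope.mono_left (nhdsWithin_mono _ hsub)
  refine h3.congr fun a => ?_
  simp [slope_def_field]

theorem tendsto_delta1_sqrt12_div_pi :
    Tendsto delta1 (nhdsWithin 0 (Ioi 0)) (nhds (Real.sqrt 12 / π)) := by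
  set F : ℝ → ℝ := fun a =>
    (2 / π) * (((Real.log (1 + a) - Real.log (1 - a)) / a) *
        ((1 - a ^ 2 / 2) / (2 * Real.sqrt (1 - 1 / 4 - a ^ 2 / 4))) +
      2 * Real.sinh ((1 / 2) * arccosh ((a ^ 2 + 1 / 2 - 4) / (1 - 4 + a ^ 2)))) with hF
  have hmem : Ioo (0:ℝ) 1 ∈ nhdsWithin (0:ℝ) (Ioi 0) :=
    Ioo_mem_nhdsGT_of_mem (by norm_num : (0:ℝ) ∈ Ico (0:ℝ) 1)
  have heq : ∀ᶠ a in nhdsWithin (0:ℝ) (Ioi 0), F a = delta1 a := by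
    filter_upwards [hmem] with a ha
    obtain ⟨h0, h1⟩ := ha
    have hspos : 0 < Real.sqrt (1 - 1 / 4 - a ^ 2 / 4) := by
      apply Real.sqrt_pos.2; nlinarith
    rw [hF, delta1, arccosh_eq a h0 h1]
    have : (Real.log (1 + a) - Real.log (1 - a)) / 2 * (1 - a ^ 2 / 2) /
        (a * Real.sqrt (1 - 1 / 4 - a ^ 2 / 4)) =
        (Real.log (1 + a) - Real.log (1 - a)) / a *
        ((1 - a ^ 2 / 2) / (2 * Real.sqrt (1 - 1 / 4 - a ^ 2 / 4))) := by
      field_simp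
    rw [this]
  refine Tendsto.congr' heq ?_
  -- second factor continuity
  have c2 : ContinuousAt (fun a : ℝ => (1 - a ^ 2 / 2) / (2 * Real.sqrt (1 - 1 / 4 - a ^ 2 / 4))) 0 := by
    apply ContinuousAt.div
    · fun_prop
    · fun_prop
    · have : (0:ℝ) < Real.sqrt (1 - 1 / 4 - (0:ℝ) ^ 2 / 4) := by
        apply Real.sqrt_pos.2; norm_num
      positivity
  have cinner : ContinuousAt (fun a : ℝ => (a ^ 2 + 1 / 2 - 4) / (1 - 4 + a ^ 2)) 0 := by
    apply ContinuousAt.div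
    · fun_prop
    · fun_prop
    · norm_num
  have harg : ((0:ℝ) ^ 2 + 1 / 2 - 4) / (1 - 4 + (0:ℝ) ^ 2) = 7 / 6 := by norm_num
  have hca : ContinuousAt arccosh (7 / 6) := by
    apply ContinuousAt.log
    · fun_prop
    · have := Real.sqrt_nonneg ((7/6:ℝ) ^ 2 - 1)
      positivity
  have hca' : ContinuousAt arccosh (((0:ℝ) ^ 2 + 1 / 2 - 4) / (1 - 4 + (0:ℝ) ^ 2)) := by
    rw [harg]; exact hca
  have hcomp : ContinuousAt (fun a : ℝ => arccosh ((a ^ 2 + 1 / 2 - 4) / (1 - 4 + a ^ 2))) 0 := by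
    show ContinuousAt (arccosh ∘ fun a : ℝ => (a ^ 2 + 1 / 2 - 4) / (1 - 4 + a ^ 2)) 0
    exact ContinuousAt.comp (g := arccosh)
      (f := fun a : ℝ => (a ^ 2 + 1 / 2 - 4) / (1 - 4 + a ^ 2)) (x := 0) hca' cinner
  have c3 : ContinuousAt (fun a : ℝ =>
      2 * Real.sinh ((1 / 2) * arccosh ((a ^ 2 + 1 / 2 - 4) / (1 - 4 + a ^ 2)))) 0 := by
    exact continuousAt_const.mul
      (Real.continuous_sinh.continuousAt.comp (continuousAt_const.mul hcomp))
  have hT : Tendsto F (nhdsWithin 0 (Ioi 0)) (nhds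
      ((2 / π) * (2 * ((1 - (0:ℝ) ^ 2 / 2) / (2 * Real.sqrt (1 - 1 / 4 - (0:ℝ) ^ 2 / 4))) +
        2 * Real.sinh ((1 / 2) * arccosh (((0:ℝ) ^ 2 + 1 / 2 - 4) / (1 - 4 + (0:ℝ) ^ 2)))))) := by
    apply Tendsto.const_mul
    exact (tendstoT1.mul (c2.tendsto.mono_left nhdsWithin_le_nhds)).add
      (c3.tendsto.mono_left nhdsWithin_le_nhds)
  convert hT using 2
  rw [harg, sinh_half_arccosh (7/6) (by norm_num)]
  set t := Real.sqrt 3 with ht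
  have ht2 : t ^ 2 = 3 := Real.sq_sqrt (by norm_num)
  have ht0 : 0 < t := Real.sqrt_pos.2 (by norm_num)
  have e1 : Real.sqrt (1 - 1 / 4 - (0:ℝ) ^ 2 / 4) = t / 2 := by
    rw [show (1 - 1 / 4 - (0:ℝ) ^ 2 / 4) = (t / 2) ^ 2 by nlinarith, Real.sqrt_sq (by positivity)]
  have e2 : Real.sqrt ((7 / 6 - 1) / 2) = 1 / (2 * t) := by
    rw [show ((7 / 6 - 1) / 2 : ℝ) = (1 / (2 * t)) ^ 2 by
      field_simp; nlinarith, Real.sqrt_sq (by positivity)]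
  have e3 : Real.sqrt 12 = 2 * t := by
    rw [show (12:ℝ) = (2 * t) ^ 2 by nlinarith, Real.sqrt_sq (by positivity)]
  rw [e1, e2, e3]
  have hπ : π ≠ 0 := Real.pi_ne_zero
  field_simp
  linear_combination ht2
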